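/- Let q be an odd prime, u_q(x) = Φ_q(x)² − q·x^{q−1}, s_q(x) = x^q − 1, t_q(x) = x + ⋯ + x^{q−1}, and let R_q(y) = Res_x(s_q(x) − y·t_q(x), u_q(x)) ∈ ℤ[y]. Then R_q is an even polynomial of degree 2q − 2 with leading coefficient −(q−1)^{q−2} and constant coefficient (q−1)·q^q. -/

import Mathlib

open Polynomial

namespace Stmt16

noncomputable def Phi (R : Type*) [CommRing R] (q : ℕ) : R[X] := ∑ i ∈ Finset.range q, X ^ i

noncomputable def UPoly (R : Type*) [CommRing R] (q : ℕ) : R[X] :=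
  (Phi R q) ^ 2 - C (q : R) * X ^ (q - 1)

def tv {R : Type*} [CommRing R] (q : ℕ) (z : R) : R := ∑ a ∈ Finset.Icc 1 (q - 1), z ^ a

noncomputable def TPoly (R : Type*) [CommRing R] (q : ℕ) : R[X] := tv q (X : R[X])

variable {R S : Type*} [CommRing R] [CommRing S] {q : ℕ}

lemma UPoly_map (f : R →+* S) : (UPoly R q).map f = UPoly S q := by
  simp [UPoly, Phi, Polynomial.map_sub, Polynomial.map_pow, Polynomial.map_sum, map_C,
    map_natCast]

lemma eval_Phi (w : R) : (Phi R q).eval w = ∑ i ∈ Finset.range q, w ^ i := by simp [Phi]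

lemma eval_UPoly (w : R) :
    (UPoly R q).eval w = (∑ i ∈ Finset.range q, w ^ i) ^ 2 - (q : R) * w ^ (q - 1) := by
  simp [UPoly, Phi]

lemma eval_TPoly (w : R) : (TPoly R q).eval w = tv q w := by
  simp [TPoly, tv, eval_finset_sum]

lemma tv_eq (h3 : 1 ≤ q) (z : R) : tv q z = z * ∑ i ∈ Finset.range (q - 1), z ^ i := by
  rw [tv, ← Finset.Ico_add_one_right_eq_Icc, show q - 1 + 1 = q from by omega,
    Finset.sum_Ico_eq_sum_range, show q - 1 = q - 1 from rfl, Finset.mul_sum]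
  exact Finset.sum_congr rfl fun i _ => by rw [pow_add, pow_one]

lemma sum_range_eq_one_add_tv (h3 : 1 ≤ q) (z : R) :
    ∑ i ∈ Finset.range q, z ^ i = 1 + tv q z := by
  have hq : q = (q - 1) + 1 := by omega
  calc ∑ i ∈ Finset.range q, z ^ i = ∑ i ∈ Finset.range ((q-1)+1), z ^ i := by rw [← hq]
    _ = (∑ i ∈ Finset.range (q-1), z ^ (i+1)) + z ^ 0 := Finset.sum_range_succ' _ _
    _ = 1 + tv q z := by
        rw [pow_zero, add_comm, tv_eq h3, Finset.mul_sum]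
        congr 1
        exact Finset.sum_congr rfl fun i _ => by rw [pow_succ']

lemma tv_mul_sub_one (h3 : 1 ≤ q) (z : R) : (z - 1) * tv q z = z ^ q - z := by
  rw [tv_eq h3, mul_comm (z - 1), mul_assoc, geom_sum_mul, mul_sub, mul_one,
    ← pow_succ', show q - 1 + 1 = q from by omega]

section Domain

variable [IsDomain R] (h3 : 3 ≤ q)

include h3

lemma Phi_mul : (Phi R q) * (X - 1) = X ^ q - 1 := geom_sum_mul X q

lemma Phi_monic : (Phi R q).Monic := monic_geom_sum_X (by omega)

lemma Phi_natDegree : (Phi R q).natDegree = q - 1 := by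
  have h := Phi_mul (R := R) h3
  have hX : ((X : R[X]) - 1).natDegree = 1 := by
    simpa using natDegree_X_sub_C (1 : R)
  have hd : ((X : R[X]) ^ q - 1).natDegree = q := by
    simpa using natDegree_X_pow_sub_C (n := q) (r := (1 : R))
  have := natDegree_mul (p := Phi R q) (q := (X : R[X]) - 1)
    (Phi_monic h3).ne_zero (by simpa using X_sub_C_ne_zero (1 : R))
  rw [h, hd, hX] at this
  omega

lemma Phi_monic' : (Phi R (q - 1)).Monic := monic_geom_sum_X (by omega)

lemma Phi_natDegree' : (Phi R (q - 1)).natDegree = q - 2 := by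
  have h : (Phi R (q-1)) * (X - 1) = X ^ (q-1) - 1 := geom_sum_mul X (q-1)
  have hX : ((X : R[X]) - 1).natDegree = 1 := by
    simpa using natDegree_X_sub_C (1 : R)
  have hd : ((X : R[X]) ^ (q-1) - 1).natDegree = q - 1 := by
    simpa using natDegree_X_pow_sub_C (n := q-1) (r := (1 : R))
  have := natDegree_mul (p := Phi R (q-1)) (q := (X : R[X]) - 1)
    (Phi_monic' h3).ne_zero (by simpa using X_sub_C_ne_zero (1 : R))
  rw [h, hd, hX] at this
  omega

lemma TPoly_eq : TPoly R q = X * Phi R (q - 1) := by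
  rw [TPoly, tv_eq (by omega : 1 ≤ q), Phi]

lemma TPoly_monic : (TPoly R q).Monic := by
  rw [TPoly_eq h3]; exact monic_X.mul (Phi_monic' h3)

lemma TPoly_natDegree : (TPoly R q).natDegree = q - 1 := by
  rw [TPoly_eq h3, natDegree_mul X_ne_zero (Phi_monic' h3).ne_zero, natDegree_X,
    Phi_natDegree' h3]
  omega

lemma degree_lt_aux : ((C (q : R)) * X ^ (q - 1)).degree < ((Phi R q) ^ 2).degree := by
  have h2 : ((Phi R q) ^ 2).Monic := (Phi_monic h3).pow 2
  have hdeg : ((Phi R q) ^ 2).degree = ((2 * (q - 1) : ℕ) : WithBot ℕ) := by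
    rw [degree_eq_natDegree h2.ne_zero, natDegree_pow, Phi_natDegree h3]
  calc ((C (q : R)) * X ^ (q - 1)).degree ≤ ((q - 1 : ℕ) : WithBot ℕ) :=
        degree_C_mul_X_pow_le _ _
    _ < ((2 * (q - 1) : ℕ) : WithBot ℕ) := by exact_mod_cast (by omega : q - 1 < 2 * (q - 1))
    _ = ((Phi R q) ^ 2).degree := hdeg.symm

lemma UPoly_monic : (UPoly R q).Monic :=
  ((Phi_monic h3).pow 2).sub_of_left (degree_lt_aux h3)

lemma UPoly_natDegree : (UPoly R q).natDegree = 2 * q - 2 := by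
  have := natDegree_eq_of_degree_eq (degree_sub_eq_left_of_degree_lt (degree_lt_aux (R := R) h3))
  rw [UPoly] at *
  rw [this, natDegree_pow, Phi_natDegree h3]
  omega

end Domain



section Complex

variable {q : ℕ}

lemma eval_monic_prod (p : ℂ[X]) (hp : p.Monic) (w : ℂ) :
    p.eval w = (p.roots.map fun z => w - z).prod := by
  conv_lhs => rw [(IsAlgClosed.splits p).eq_prod_roots_of_monic hp]
  rw [eval_multiset_prod, Multiset.map_map]
  simp [Function.comp]

lemma prod_eval_roots (p g : ℂ[X]) (hp : p.Monic) (he : Even (Multiset.card p.roots)) :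
    (p.roots.map fun z => g.eval z).prod
      = g.leadingCoeff ^ Multiset.card p.roots * (g.roots.map fun w => p.eval w).prod := by
  have hev : ∀ z : ℂ, g.eval z = g.leadingCoeff * (g.roots.map fun w => z - w).prod := by
    intro z
    conv_lhs => rw [(IsAlgClosed.splits g).eq_prod_roots]
    rw [eval_mul, eval_C, eval_multiset_prod, Multiset.map_map]
    simp [Function.comp]
  calc (p.roots.map fun z => g.eval z).prod
      = (p.roots.map fun z => g.leadingCoeff * (g.roots.map fun w => z - w).prod).prod :=
        congrArg Multiset.prod (Multiset.map_congr rfl fun z _ => hev z)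
    _ = (p.roots.map fun _ => g.leadingCoeff).prod *
        (p.roots.map fun z => (g.roots.map fun w => z - w).prod).prod := Multiset.prod_map_mul
    _ = g.leadingCoeff ^ Multiset.card p.roots *
        (g.roots.map fun w => (p.roots.map fun z => z - w).prod).prod := by
        rw [Multiset.map_const', Multiset.prod_replicate, Multiset.prod_map_prod_map]
    _ = g.leadingCoeff ^ Multiset.card p.roots * (g.roots.map fun w => p.eval w).prod := by
        congr 1
        refine congrArg Multiset.prod (Multiset.map_congr rfl fun w _ => ?_)
        calc (p.roots.map fun z => z - w).prod
            = (p.roots.map fun z => (-1) * (w - z)).prod :=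
              congrArg Multiset.prod (Multiset.map_congr rfl fun z _ => by ring)
          _ = ((-1 : ℂ)) ^ Multiset.card p.roots * (p.roots.map fun z => w - z).prod := by
              rw [Multiset.prod_map_mul, Multiset.map_const', Multiset.prod_replicate]
          _ = p.eval w := by rw [he.neg_one_pow, one_mul, ← eval_monic_prod p hp]

variable (h3 : 3 ≤ q)
include h3

lemma eval_zero_UPoly : (UPoly ℂ q).eval 0 = 1 := by
  rw [eval_UPoly, zero_pow (by omega : q - 1 ≠ 0)]
  have h : ∑ i ∈ Finset.range q, (0:ℂ) ^ i = 1 := by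
    rw [Finset.sum_eq_single 0]
    · exact pow_zero 0
    · intro b _ hb; exact zero_pow hb
    · intro h; exact absurd (Finset.mem_range.mpr (by omega)) h
  rw [h]; ring

lemma UPoly_card_roots : Multiset.card (UPoly ℂ q).roots = 2 * q - 2 := by
  rw [← UPoly_natDegree (R := ℂ) h3]
  exact splits_iff_card_roots.mp (IsAlgClosed.splits _)

lemma UPoly_card_even : Even (Multiset.card (UPoly ℂ q).roots) := by
  rw [UPoly_card_roots h3]; exact ⟨q - 1, by omega⟩

lemma zero_not_mem_roots : (0 : ℂ) ∉ (UPoly ℂ q).roots := by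
  intro h
  have h0 : (UPoly ℂ q).eval 0 = 0 := isRoot_of_mem_roots h
  rw [eval_zero_UPoly h3] at h0
  exact one_ne_zero h0

lemma prod_roots_eq_one : ((UPoly ℂ q).roots.map (fun z => z)).prod = 1 := by
  have h1 := eval_monic_prod (UPoly ℂ q) (UPoly_monic h3) 0
  rw [eval_zero_UPoly h3] at h1
  have h2 : ((UPoly ℂ q).roots.map fun z => (0:ℂ) - z).prod
      = ((-1:ℂ)) ^ (Multiset.card (UPoly ℂ q).roots)
        * ((UPoly ℂ q).roots.map fun z => z).prod := by
    calc ((UPoly ℂ q).roots.map fun z => (0:ℂ) - z).prod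
        = ((UPoly ℂ q).roots.map fun z => (-1) * z).prod :=
          congrArg Multiset.prod (Multiset.map_congr rfl fun z _ => by ring)
      _ = _ := by rw [Multiset.prod_map_mul, Multiset.map_const', Multiset.prod_replicate]
  rw [h2, (UPoly_card_even h3).neg_one_pow, one_mul] at h1
  exact h1.symm

lemma tv_ne_zero {z : ℂ} (hz : z ∈ (UPoly ℂ q).roots) : tv q z ≠ 0 := by
  intro h0
  have heval : (UPoly ℂ q).eval z = 0 := isRoot_of_mem_roots hz
  rw [eval_UPoly, sum_range_eq_one_add_tv (by omega), h0, add_zero, one_pow] at heval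
  have hq1 : (q : ℂ) * z ^ (q - 1) = 1 := by linear_combination -heval
  have hmul := tv_mul_sub_one (by omega : 1 ≤ q) z
  rw [h0, mul_zero] at hmul
  have hzq : z ^ q = z := by linear_combination -hmul
  have hz0 : z ≠ 0 := by
    intro h
    rw [h, zero_pow (by omega : q - 1 ≠ 0), mul_zero] at hq1
    exact zero_ne_one hq1
  have hpow : z ^ (q - 1) = 1 := by
    have h1 : z ^ (q - 1) * z = 1 * z := by
      rw [← pow_succ, show q - 1 + 1 = q from by omega, hzq, one_mul]
    exact mul_right_cancel₀ hz0 h1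
  rw [hpow, mul_one] at hq1
  have hqq : q = 1 := by exact_mod_cast hq1
  omega

lemma prod_tv : ((UPoly ℂ q).roots.map fun z => tv q z).prod = ((1 : ℂ) - q) ^ (q - 2) := by
  have hswap := prod_eval_roots (UPoly ℂ q) (TPoly ℂ q) (UPoly_monic h3) (UPoly_card_even h3)
  have h1 : ((UPoly ℂ q).roots.map fun z => tv q z).prod
      = ((UPoly ℂ q).roots.map fun z => (TPoly ℂ q).eval z).prod :=
    congrArg Multiset.prod (Multiset.map_congr rfl fun z _ => (eval_TPoly z).symm)
  rw [h1, hswap, (TPoly_monic h3).leadingCoeff, one_pow, one_mul]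
  have hTne : (TPoly ℂ q) ≠ 0 := (TPoly_monic h3).ne_zero
  have hroots : (TPoly ℂ q).roots = 0 ::ₘ (Phi ℂ (q-1)).roots := by
    rw [TPoly_eq h3, roots_mul (by rw [← TPoly_eq h3]; exact hTne), roots_X,
      Multiset.singleton_add]
  rw [hroots, Multiset.map_cons, Multiset.prod_cons, eval_zero_UPoly h3, one_mul]
  have hval : ∀ w ∈ (Phi ℂ (q-1)).roots, (UPoly ℂ q).eval w = 1 - q := by
    intro w hw
    have hw0 : (Phi ℂ (q-1)).eval w = 0 := isRoot_of_mem_roots hw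
    rw [eval_Phi] at hw0
    have hpow : w ^ (q - 1) = 1 := by
      have hgs := geom_sum_mul w (q-1)
      rw [hw0, zero_mul] at hgs
      linear_combination -hgs
    have hsum : ∑ i ∈ Finset.range q, w ^ i = 1 := by
      have : ∑ i ∈ Finset.range ((q-1)+1), w ^ i = 1 := by
        rw [Finset.sum_range_succ, hw0, hpow, zero_add]
      rw [show q = (q-1)+1 from by omega]
      exact this
    rw [eval_UPoly, hsum, hpow, one_pow]
    ring
  have hcard : Multiset.card (Phi ℂ (q-1)).roots = q - 2 := by
    rw [← Phi_natDegree' (R := ℂ) h3]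
    exact splits_iff_card_roots.mp (IsAlgClosed.splits _)
  rw [Multiset.map_congr rfl hval, Multiset.map_const', Multiset.prod_replicate, hcard]

lemma prod_phi_roots_eq_one (hodd : Odd q) :
    ((Phi ℂ q).roots.map (fun w => w)).prod = 1 := by
  have h0 : (Phi ℂ q).eval 0 = 1 := by
    rw [eval_Phi]
    rw [Finset.sum_eq_single 0]
    · exact pow_zero 0
    · intro b _ hb; exact zero_pow hb
    · intro h; exact absurd (Finset.mem_range.mpr (by omega)) h
  have h1 := eval_monic_prod (Phi ℂ q) (Phi_monic h3) 0
  rw [h0] at h1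
  have hcard : Multiset.card (Phi ℂ q).roots = q - 1 := by
    rw [← Phi_natDegree (R := ℂ) h3]
    exact splits_iff_card_roots.mp (IsAlgClosed.splits _)
  have heven : Even (Multiset.card (Phi ℂ q).roots) := by
    rw [hcard]; exact Nat.Odd.sub_odd hodd odd_one
  have h2 : ((Phi ℂ q).roots.map fun z => (0:ℂ) - z).prod
      = ((-1:ℂ)) ^ (Multiset.card (Phi ℂ q).roots) * ((Phi ℂ q).roots.map fun z => z).prod := by
    calc ((Phi ℂ q).roots.map fun z => (0:ℂ) - z).prod
        = ((Phi ℂ q).roots.map fun z => (-1) * z).prod :=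
          congrArg Multiset.prod (Multiset.map_congr rfl fun z _ => by ring)
      _ = _ := by rw [Multiset.prod_map_mul, Multiset.map_const', Multiset.prod_replicate]
  rw [h2, heven.neg_one_pow, one_mul] at h1
  exact h1.symm

lemma prod_s (hodd : Odd q) :
    ((UPoly ℂ q).roots.map fun z => z ^ q - 1).prod = ((q:ℂ) ^ 2 - q) * (q:ℂ) ^ (q - 1) := by
  have hg : ((X : ℂ[X]) ^ q - 1) = X ^ q - C 1 := by rw [map_one]
  have hgm : ((X : ℂ[X]) ^ q - 1).Monic := by rw [hg]; exact monic_X_pow_sub_C 1 (by omega)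
  have hswap := prod_eval_roots (UPoly ℂ q) ((X : ℂ[X]) ^ q - 1) (UPoly_monic h3)
    (UPoly_card_even h3)
  have h1 : ((UPoly ℂ q).roots.map fun z => z ^ q - 1).prod
      = ((UPoly ℂ q).roots.map fun z => ((X : ℂ[X]) ^ q - 1).eval z).prod :=
    congrArg Multiset.prod (Multiset.map_congr rfl fun z _ => by simp)
  rw [h1, hswap, hgm.leadingCoeff, one_pow, one_mul]
  have hroots : ((X : ℂ[X]) ^ q - 1).roots = (Phi ℂ q).roots + {1} := by
    rw [← Phi_mul h3, roots_mul (by rw [Phi_mul h3, hg]; exact hgm.ne_zero)]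
    congr 1
    rw [show (X - 1 : ℂ[X]) = X - C 1 from by rw [map_one], roots_X_sub_C]
  rw [hroots, Multiset.map_add, Multiset.prod_add]
  have hval1 : (UPoly ℂ q).eval 1 = (q:ℂ) ^ 2 - q := by
    rw [eval_UPoly, one_pow]
    simp
  have hval : ∀ w ∈ (Phi ℂ q).roots, (UPoly ℂ q).eval w = (-(q:ℂ)) * w ^ (q - 1) := by
    intro w hw
    have hw0 : (Phi ℂ q).eval w = 0 := isRoot_of_mem_roots hw
    rw [eval_Phi] at hw0
    rw [eval_UPoly, hw0]
    ring
  have hcard : Multiset.card (Phi ℂ q).roots = q - 1 := by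
    rw [← Phi_natDegree (R := ℂ) h3]
    exact splits_iff_card_roots.mp (IsAlgClosed.splits _)
  have hprodphi : ((Phi ℂ q).roots.map fun w => (UPoly ℂ q).eval w).prod = (q:ℂ) ^ (q - 1) := by
    rw [Multiset.map_congr rfl hval]
    have : ((Phi ℂ q).roots.map fun w => (-(q:ℂ)) * w ^ (q - 1)).prod
        = (-(q:ℂ)) ^ (Multiset.card (Phi ℂ q).roots)
          * (((Phi ℂ q).roots.map fun w => w).prod) ^ (q - 1) := by
      rw [Multiset.prod_map_mul, Multiset.map_const', Multiset.prod_replicate,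
        Multiset.prod_map_pow]
    rw [this, prod_phi_roots_eq_one h3 hodd, one_pow, hcard, mul_one]
    have heven : Even (q - 1) := Nat.Odd.sub_odd hodd odd_one
    rw [heven.neg_pow]
  rw [hprodphi]
  simp only [Multiset.map_singleton, Multiset.prod_singleton, hval1]
  ring

end Complex


lemma tv_eq' {R : Type*} [CommRing R] {q : ℕ} (h1 : 1 ≤ q) (z : R) :
    tv q z = ∑ i ∈ Finset.range (q - 1), z ^ (i + 1) := by
  rw [tv_eq h1, Finset.mul_sum]
  exact Finset.sum_congr rfl fun i _ => (pow_succ' z i).symm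

section EvenPart

variable {q : ℕ} (h3 : 3 ≤ q)
include h3

lemma recip_eval {w : ℂ} (hw : w ≠ 0) :
    w ^ (2 * q - 2) * (UPoly ℂ q).eval w⁻¹ = (UPoly ℂ q).eval w := by
  rw [eval_UPoly, eval_UPoly]
  have hv : w ^ (2 * q - 2) = (w ^ (q - 1)) ^ 2 := by
    rw [← pow_mul]; congr 1; omega
  have hvne : w ^ (q - 1) ≠ 0 := pow_ne_zero _ hw
  have hb : w ^ (q - 1) * ∑ i ∈ Finset.range q, (w⁻¹) ^ i = ∑ i ∈ Finset.range q, w ^ i := by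
    rw [Finset.mul_sum, ← Finset.sum_range_reflect (fun i => w ^ i) q]
    refine Finset.sum_congr rfl fun i hi => ?_
    have hiq : i < q := Finset.mem_range.mp hi
    have hsplit : w ^ (q - 1) = w ^ (q - 1 - i) * w ^ i := by
      rw [← pow_add]; congr 1; omega
    rw [inv_pow, hsplit, mul_inv_cancel_right₀ (pow_ne_zero i hw)]
  have h2 : (w ^ (q-1)) ^ 2 * (w⁻¹) ^ (q-1) = w ^ (q-1) := by
    rw [inv_pow, sq, mul_inv_cancel_right₀ hvne]
  rw [hv]
  calc (w ^ (q-1)) ^ 2 * ((∑ i ∈ Finset.range q, (w⁻¹) ^ i) ^ 2 - (q:ℂ) * (w⁻¹) ^ (q-1))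
      = (w ^ (q-1) * ∑ i ∈ Finset.range q, (w⁻¹) ^ i) ^ 2
        - (q:ℂ) * ((w ^ (q-1)) ^ 2 * (w⁻¹) ^ (q-1)) := by ring
    _ = _ := by rw [hb, h2]

lemma tv_inv {z : ℂ} (hz : z ≠ 0) : z ^ q * tv q z⁻¹ = tv q z := by
  rw [tv_eq' (show 1 ≤ q by omega), tv_eq' (show 1 ≤ q by omega), Finset.mul_sum,
    ← Finset.sum_range_reflect (fun i => z ^ (i + 1)) (q - 1)]
  refine Finset.sum_congr rfl fun i hi => ?_
  have hiq : i < q - 1 := Finset.mem_range.mp hi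
  have h1 : q - 1 - 1 - i + 1 = q - 1 - i := by omega
  rw [h1, inv_pow]
  have hsplit : z ^ q = z ^ (q - 1 - i) * z ^ (i + 1) := by rw [← pow_add]; congr 1; omega
  rw [hsplit, mul_inv_cancel_right₀ (pow_ne_zero _ hz)]

lemma roots_inv_invariant :
    (UPoly ℂ q).roots.map (fun z => z⁻¹) = (UPoly ℂ q).roots := by
  have hz0 : ∀ z ∈ (UPoly ℂ q).roots, z ≠ 0 := fun z hz h =>
    zero_not_mem_roots h3 (h ▸ hz)
  have h2 : UPoly ℂ q = ((UPoly ℂ q).roots.map fun z => X - C z⁻¹).prod := by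
    apply eq_of_infinite_eval_eq
    apply Set.Infinite.mono (s := ({(0:ℂ)}ᶜ : Set ℂ))
    · intro w hw
      have hwne : w ≠ 0 := by simpa using hw
      show (UPoly ℂ q).eval w = _
      rw [eval_multiset_prod, Multiset.map_map]
      have hpt : ∀ z ∈ (UPoly ℂ q).roots,
          ((fun p => eval w p) ∘ fun z => X - C z⁻¹) z = z⁻¹ * (w * (z - w⁻¹)) := by
        intro z hz
        have hzne := hz0 z hz
        simp only [Function.comp_apply, eval_sub, eval_X, eval_C]
        field_simp
      rw [Multiset.map_congr rfl hpt]
      have hsplit : ((UPoly ℂ q).roots.map fun z => z⁻¹ * (w * (z - w⁻¹))).prod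
          = ((UPoly ℂ q).roots.map fun z => z⁻¹).prod *
            (((UPoly ℂ q).roots.map fun _ => w).prod *
              ((UPoly ℂ q).roots.map fun z => z - w⁻¹).prod) := by
        rw [← Multiset.prod_map_mul, ← Multiset.prod_map_mul]
      rw [hsplit]
      have hi1 : ((UPoly ℂ q).roots.map fun z => z⁻¹).prod = 1 := by
        rw [Multiset.prod_map_inv, prod_roots_eq_one h3, inv_one]
      have hi2 : ((UPoly ℂ q).roots.map fun _ => w).prod
          = w ^ Multiset.card (UPoly ℂ q).roots := by
        rw [Multiset.map_const', Multiset.prod_replicate]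
      have hi3 : ((UPoly ℂ q).roots.map fun z => z - w⁻¹).prod = (UPoly ℂ q).eval w⁻¹ := by
        calc ((UPoly ℂ q).roots.map fun z => z - w⁻¹).prod
            = ((UPoly ℂ q).roots.map fun z => (-1) * (w⁻¹ - z)).prod :=
              congrArg Multiset.prod (Multiset.map_congr rfl fun z _ => by ring)
          _ = ((-1:ℂ)) ^ Multiset.card (UPoly ℂ q).roots *
              ((UPoly ℂ q).roots.map fun z => w⁻¹ - z).prod := by
              rw [Multiset.prod_map_mul, Multiset.map_const', Multiset.prod_replicate]
          _ = (UPoly ℂ q).eval w⁻¹ := by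
              rw [(UPoly_card_even h3).neg_one_pow, one_mul,
                ← eval_monic_prod _ (UPoly_monic h3)]
      rw [hi1, hi2, hi3, one_mul, UPoly_card_roots h3, recip_eval h3 hwne]
    · exact Set.Finite.infinite_compl (Set.finite_singleton 0)
  have h1 : ((UPoly ℂ q).roots.map fun z => X - C z⁻¹)
      = (((UPoly ℂ q).roots.map fun z => z⁻¹).map fun a => X - C a) := by
    rw [Multiset.map_map]; rfl
  conv_rhs => rw [h2]
  rw [h1, roots_multiset_prod_X_sub_C]

noncomputable def Sc (q : ℕ) : ℂ[X] :=
  (((UPoly ℂ q).roots).map fun z => C (-(tv q z)) * X + C (z ^ q - 1)).prod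

omit h3 in
lemma eval_Sc (y : ℂ) :
    (Sc q).eval y = ((UPoly ℂ q).roots.map fun z => z ^ q - 1 - y * tv q z).prod := by
  rw [Sc, eval_multiset_prod, Multiset.map_map]
  refine congrArg Multiset.prod (Multiset.map_congr rfl fun z _ => ?_)
  simp only [Function.comp_apply, eval_add, eval_mul, eval_C, eval_X]
  ring

lemma Sc_lead_aux :
    (((UPoly ℂ q).roots).map fun z => C (-(tv q z)) * X + C (z ^ q - 1)).map leadingCoeff
      = ((UPoly ℂ q).roots).map fun z => -(tv q z) := by
  rw [Multiset.map_map]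
  exact Multiset.map_congr rfl fun z hz =>
    leadingCoeff_linear (neg_ne_zero.mpr (tv_ne_zero h3 hz))

lemma Sc_lead_prod :
    (((UPoly ℂ q).roots).map fun z => -(tv q z)).prod = ((1:ℂ) - q) ^ (q - 2) := by
  calc (((UPoly ℂ q).roots).map fun z => -(tv q z)).prod
      = (((UPoly ℂ q).roots).map fun z => (-1) * tv q z).prod :=
        congrArg Multiset.prod (Multiset.map_congr rfl fun z _ => by ring)
    _ = ((-1:ℂ)) ^ Multiset.card (UPoly ℂ q).roots *
        (((UPoly ℂ q).roots).map fun z => tv q z).prod := by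
        rw [Multiset.prod_map_mul, Multiset.map_const', Multiset.prod_replicate]
    _ = ((1:ℂ) - q) ^ (q - 2) := by
        rw [(UPoly_card_even h3).neg_one_pow, one_mul, prod_tv h3]

lemma one_sub_q_ne : ((1:ℂ) - q) ≠ 0 := by
  intro h
  have : (q : ℂ) = 1 := by linear_combination -h
  have : q = 1 := by exact_mod_cast this
  omega

lemma Sc_lead_prod_ne : (((UPoly ℂ q).roots).map fun z => -(tv q z)).prod ≠ 0 := by
  rw [Sc_lead_prod h3]
  exact pow_ne_zero _ (one_sub_q_ne h3)

lemma Sc_leadingCoeff : (Sc q).leadingCoeff = ((1:ℂ) - q) ^ (q - 2) := by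
  rw [Sc, leadingCoeff_multiset_prod' _ (by rw [Sc_lead_aux h3]; exact Sc_lead_prod_ne h3),
    Sc_lead_aux h3, Sc_lead_prod h3]

lemma Sc_natDegree : (Sc q).natDegree = 2 * q - 2 := by
  rw [Sc, natDegree_multiset_prod' _ (by rw [Sc_lead_aux h3]; exact Sc_lead_prod_ne h3)]
  have h1 : (((UPoly ℂ q).roots).map fun z => C (-(tv q z)) * X + C (z ^ q - 1)).map
      (fun f => f.natDegree) = ((UPoly ℂ q).roots).map fun _ => 1 := by
    rw [Multiset.map_map]
    exact Multiset.map_congr rfl fun z hz =>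
      natDegree_linear (neg_ne_zero.mpr (tv_ne_zero h3 hz))
  rw [h1, Multiset.map_const', Multiset.sum_replicate, smul_eq_mul, mul_one,
    UPoly_card_roots h3]

lemma Sc_coeff_zero (hodd : Odd q) :
    (Sc q).coeff 0 = ((q:ℂ) ^ 2 - q) * (q:ℂ) ^ (q - 1) := by
  rw [coeff_zero_eq_eval_zero, eval_Sc]
  rw [Multiset.map_congr rfl (fun z _ => by ring :
    ∀ z ∈ (UPoly ℂ q).roots, z ^ q - 1 - 0 * tv q z = z ^ q - 1)]
  exact prod_s h3 hodd

lemma Sc_eval_neg (y : ℂ) : (Sc q).eval (-y) = (Sc q).eval y := by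
  rw [eval_Sc, eval_Sc]
  have hz0 : ∀ z ∈ (UPoly ℂ q).roots, z ≠ 0 := fun z hz h =>
    zero_not_mem_roots h3 (h ▸ hz)
  have hL : ((UPoly ℂ q).roots.map fun z => z ^ q - 1 - (-y) * tv q z).prod
      = ((UPoly ℂ q).roots.map fun z => z ^ q - 1 + y * tv q z).prod :=
    congrArg Multiset.prod (Multiset.map_congr rfl fun z _ => by ring)
  rw [hL]
  conv_rhs => rw [← roots_inv_invariant h3, Multiset.map_map]
  have hpt : ∀ z ∈ (UPoly ℂ q).roots,
      ((fun z => z ^ q - 1 - y * tv q z) ∘ fun z => z⁻¹) z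
        = (-(z ^ q)⁻¹) * (z ^ q - 1 + y * tv q z) := by
    intro z hz
    have hzne := hz0 z hz
    have hzq : z ^ q ≠ 0 := pow_ne_zero _ hzne
    have htv : tv q z⁻¹ = (z ^ q)⁻¹ * tv q z := by
      rw [← tv_inv h3 hzne]
      field_simp
    simp only [Function.comp_apply, inv_pow]
    rw [htv]
    field_simp
    ring
  rw [Multiset.map_congr rfl hpt]
  have hsplit : ((UPoly ℂ q).roots.map fun z => (-(z ^ q)⁻¹) * (z ^ q - 1 + y * tv q z)).prod
      = ((UPoly ℂ q).roots.map fun z => -(z ^ q)⁻¹).prod *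
        ((UPoly ℂ q).roots.map fun z => z ^ q - 1 + y * tv q z).prod := by
    rw [← Multiset.prod_map_mul]
  rw [hsplit]
  have hi : ((UPoly ℂ q).roots.map fun z => -(z ^ q)⁻¹).prod = 1 := by
    calc ((UPoly ℂ q).roots.map fun z => -(z ^ q)⁻¹).prod
        = ((UPoly ℂ q).roots.map fun z => (-1) * (z ^ q)⁻¹).prod :=
          congrArg Multiset.prod (Multiset.map_congr rfl fun z _ => by ring)
      _ = ((-1:ℂ)) ^ Multiset.card (UPoly ℂ q).roots *
          ((UPoly ℂ q).roots.map fun z => (z ^ q)⁻¹).prod := by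
          rw [Multiset.prod_map_mul, Multiset.map_const', Multiset.prod_replicate]
      _ = 1 := by
          rw [(UPoly_card_even h3).neg_one_pow, one_mul, Multiset.prod_map_inv]
          have hp : ((UPoly ℂ q).roots.map fun z => z ^ q).prod
              = (((UPoly ℂ q).roots.map fun z => z).prod) ^ q := Multiset.prod_map_pow
          rw [hp, prod_roots_eq_one h3, one_pow, inv_one]
  rw [hi, one_mul]

end EvenPart


lemma coeff_comp_neg (p : ℤ[X]) (k : ℕ) :
    (p.comp (-X)).coeff k = (-1) ^ k * p.coeff k := by
  have hpow : ∀ i : ℕ, ((-X : ℤ[X])) ^ i = C ((-1 : ℤ) ^ i) * X ^ i := by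
    intro i
    rw [neg_pow]
    congr 1
    rw [map_pow, map_neg, map_one]
  rw [comp_eq_sum_left, Polynomial.sum_def, finset_sum_coeff]
  rw [Finset.sum_eq_single k]
  · rw [hpow, coeff_C_mul, coeff_C_mul, coeff_X_pow, if_pos rfl, mul_one, mul_comm]
  · intro b _ hbk
    rw [hpow, coeff_C_mul, coeff_C_mul, coeff_X_pow, if_neg (fun h => hbk h.symm),
      mul_zero, mul_zero]
  · intro hk
    rw [notMem_support_iff.mp hk, map_zero, zero_mul, coeff_zero]

section Integrality

variable {q : ℕ}

lemma exists_int_rep (h3 : 3 ≤ q) : ∃ Rz : ℤ[X], Rz.map (Int.castRingHom ℂ) = Sc q := by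
  classical
  set K := (UPoly ℚ q).SplittingField with hK
  haveI : Normal ℚ K := Polynomial.SplittingField.instNormal _
  haveI : IsGalois ℚ K := ⟨⟩
  have hsplitsQ : Splits ((UPoly ℚ q).map (algebraMap ℚ K)) := SplittingField.splits _
  have hUK : (UPoly ℚ q).map (algebraMap ℚ K) = UPoly K q := UPoly_map _
  have hsplits : Splits (UPoly K q) := by
    rw [← hUK]; exact hsplitsQ
  set ρK := (UPoly K q).roots with hρK
  set SK : K[X] := (ρK.map fun z => C (-(tv q z)) * X + C (z ^ q - 1)).prod with hSK
  have hfix : ∀ (σ : K ≃ₐ[ℚ] K) (k : ℕ), σ (SK.coeff k) = SK.coeff k := by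
    intro σ k
    have hmapU : (UPoly K q).map (σ : K →+* K) = UPoly K q := UPoly_map _
    have hrootsσ : ρK.map (σ : K → K) = ρK := by
      have h := hsplits.roots_map (σ : K →+* K)
      rw [hmapU] at h
      exact h.symm
    have hmapSK : SK.map (σ : K →+* K) = SK := by
      rw [hSK, Polynomial.map_multiset_prod, Multiset.map_map]
      have hpt : ∀ z ∈ ρK,
          (Polynomial.map (σ : K →+* K) ∘ fun z => C (-(tv q z)) * X + C (z ^ q - 1)) z
            = C (-(tv q (σ z))) * X + C ((σ z) ^ q - 1) := by
        intro z hz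
        simp only [Function.comp_apply, Polynomial.map_add, Polynomial.map_mul, map_C,
          Polynomial.map_X]
        have e1 : (σ : K →+* K) (tv q z) = tv q ((σ : K →+* K) z) := by
          rw [tv, tv, map_sum]
          exact Finset.sum_congr rfl fun a _ => map_pow _ z a
        have e2 : (σ : K →+* K) (z ^ q - 1) = ((σ : K →+* K) z) ^ q - 1 := by
          rw [map_sub, map_pow, map_one]
        rw [map_neg, e1, e2]
        rfl
      rw [Multiset.map_congr rfl hpt]
      have h2 : (ρK.map fun z => C (-(tv q (σ z))) * X + C ((σ z) ^ q - 1))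
          = ((ρK.map (σ : K → K)).map fun w => C (-(tv q w)) * X + C (w ^ q - 1)) := by
        rw [Multiset.map_map]; rfl
      rw [h2, hrootsσ]
    calc σ (SK.coeff k) = ((σ : K →+* K)) (SK.coeff k) := rfl
      _ = (SK.map (σ : K →+* K)).coeff k := (coeff_map _ _).symm
      _ = SK.coeff k := by rw [hmapSK]
  have hintroot : ∀ z ∈ ρK, IsIntegral ℤ z := by
    intro z hz
    refine ⟨UPoly ℤ q, UPoly_monic h3, ?_⟩
    have heval : (UPoly K q).eval z = 0 := isRoot_of_mem_roots hz
    rw [← UPoly_map (Int.castRingHom K), eval_map] at heval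
    rwa [RingHom.ext_int (algebraMap ℤ K) (Int.castRingHom K)]
  have hfac : ∀ p ∈ (ρK.map fun z => C (-(tv q z)) * X + C (z ^ q - 1)),
      ∀ k, IsIntegral ℤ (p.coeff k) := by
    intro p hp k
    obtain ⟨z, hz, rfl⟩ := Multiset.mem_map.mp hp
    have ha : IsIntegral ℤ (tv q z) := by
      rw [tv]
      exact IsIntegral.sum _ fun a _ => (hintroot z hz).pow a
    have hb : IsIntegral ℤ (z ^ q - 1) := ((hintroot z hz).pow q).sub isIntegral_one
    rcases k with _ | _ | n
    · rw [coeff_add, coeff_C_mul, coeff_X_zero, mul_zero, zero_add, coeff_C, if_pos rfl]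
      exact hb
    · rw [coeff_add, coeff_C_mul, coeff_X_one, mul_one, coeff_C]
      norm_num
      exact ha
    · rw [coeff_add, coeff_C_mul, coeff_X, if_neg (by omega), mul_zero, zero_add, coeff_C,
        if_neg (by omega)]
      exact isIntegral_zero
  have hint : ∀ k, IsIntegral ℤ (SK.coeff k) := by
    intro k
    exact Multiset.prod_induction (fun p : K[X] => ∀ k, IsIntegral ℤ (p.coeff k))
      (ρK.map fun z => C (-(tv q z)) * X + C (z ^ q - 1))
      (fun a b ha hb k => by
        rw [coeff_mul]
        exact IsIntegral.sum _ fun x _ => (ha x.1).mul (hb x.2))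
      (fun k => by
        rw [coeff_one]
        split
        · exact isIntegral_one
        · exact isIntegral_zero)
      hfac k
  have hbot : IntermediateField.fixedField (⊤ : Subgroup (K ≃ₐ[ℚ] K)) = ⊥ :=
    OrderIso.map_bot (IsGalois.intermediateFieldEquivSubgroup (F := ℚ) (E := K)).symm
  have hrat : ∀ k, ∃ n : ℤ, (Int.castRingHom K) n = SK.coeff k := by
    intro k
    have hfixk : SK.coeff k ∈ IntermediateField.fixedField (⊤ : Subgroup (K ≃ₐ[ℚ] K)) :=
      fun g => hfix g.1 k
    rw [hbot, IntermediateField.mem_bot] at hfixk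
    obtain ⟨r, hr⟩ := hfixk
    have hrint : IsIntegral ℤ r := by
      have h := hint k
      rw [← hr] at h
      exact (isIntegral_algebraMap_iff (algebraMap ℚ K).injective).mp h
    obtain ⟨n, hn⟩ := IsIntegrallyClosed.isIntegral_iff.mp hrint
    refine ⟨n, ?_⟩
    rw [RingHom.ext_int (Int.castRingHom K) ((algebraMap ℚ K).comp (algebraMap ℤ ℚ)),
      RingHom.comp_apply, hn, hr]
  have hlift : SK ∈ Polynomial.lifts (Int.castRingHom K) := by
    rw [lifts_iff_coeff_lifts]
    intro n
    obtain ⟨m, hm⟩ := hrat n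
    exact ⟨m, hm⟩
  obtain ⟨Rz, hRz⟩ := (mem_lifts _).mp hlift
  let ι : K →ₐ[ℚ] ℂ := IsAlgClosed.lift
  have hcomp : (ι : K →+* ℂ).comp (Int.castRingHom K) = Int.castRingHom ℂ :=
    RingHom.ext_int _ _
  have hmapι : SK.map (ι : K →+* ℂ) = Sc q := by
    have hUC : (UPoly K q).map (ι : K →+* ℂ) = UPoly ℂ q := UPoly_map _
    have hrootsℂ : (UPoly ℂ q).roots = ρK.map (ι : K → ℂ) := by
      rw [← hUC, hsplits.roots_map _]
      rfl
    rw [hSK, Polynomial.map_multiset_prod, Multiset.map_map, Sc, hrootsℂ, Multiset.map_map]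
    refine congrArg Multiset.prod (Multiset.map_congr rfl fun z hz => ?_)
    simp only [Function.comp_apply, Polynomial.map_add, Polynomial.map_mul, map_C,
      Polynomial.map_X]
    have e1 : (ι : K →+* ℂ) (tv q z) = tv q ((ι : K →+* ℂ) z) := by
      rw [tv, tv, map_sum]
      exact Finset.sum_congr rfl fun a _ => map_pow _ z a
    have e2 : (ι : K →+* ℂ) (z ^ q - 1) = ((ι : K →+* ℂ) z) ^ q - 1 := by
      rw [map_sub, map_pow, map_one]
    rw [map_neg, e1, e2]
    rfl
  refine ⟨Rz, ?_⟩
  rw [← hcomp, ← Polynomial.map_map, hRz, hmapι]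

end Integrality

end Stmt16

open Stmt16 in
theorem stmt16 (q : ℕ) (hq : q.Prime) (hodd : Odd q)
    (uq : Polynomial ℂ)
    (huq : uq = (∑ i ∈ Finset.range q, X ^ i) ^ 2 - C (q : ℂ) * X ^ (q - 1)) :
    ∃ R : Polynomial ℤ,
      (∀ y : ℂ,
        ((R.map (Int.castRingHom ℂ)).eval y) =
          (uq.roots.map (fun z => z ^ q - 1 - y * ∑ a ∈ Finset.Icc 1 (q - 1), z ^ a)).prod) ∧
      R.natDegree = 2 * q - 2 ∧
      (∀ k : ℕ, Odd k → R.coeff k = 0) ∧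
      R.leadingCoeff = -((q : ℤ) - 1) ^ (q - 2) ∧
      R.coeff 0 = ((q : ℤ) - 1) * (q : ℤ) ^ q := by
  have hne2 : q ≠ 2 := by
    rintro rfl
    exact (by decide : ¬ Odd 2) hodd
  have h3 : 3 ≤ q := by
    have h2 := hq.two_le
    omega
  have hinj : Function.Injective (Int.castRingHom ℂ) := fun a b h => by
    have : ((a : ℤ) : ℂ) = ((b : ℤ) : ℂ) := h
    exact_mod_cast this
  have huq' : uq = UPoly ℂ q := huq
  obtain ⟨R, hR⟩ := exists_int_rep (q := q) h3
  refine ⟨R, ?_, ?_, ?_, ?_, ?_⟩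
  · intro y
    rw [hR, eval_Sc, huq']
    rfl
  · have h := Sc_natDegree h3
    rw [← hR, natDegree_map_eq_of_injective hinj R] at h
    exact h
  · intro k hk
    have hcomp : R.comp (-X) = R := by
      apply Polynomial.map_injective (Int.castRingHom ℂ) hinj
      rw [Polynomial.map_comp, hR]
      have hX : Polynomial.map (Int.castRingHom ℂ) (-X) = -X := by simp
      rw [hX]
      apply Polynomial.funext
      intro y
      rw [eval_comp, eval_neg, eval_X, Sc_eval_neg h3]
    have h := coeff_comp_neg R k
    rw [hcomp, hk.neg_one_pow] at h
    omega
  · have hl := Sc_leadingCoeff h3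
    rw [← hR, Polynomial.leadingCoeff_map_of_injective hinj R] at hl
    have hodd2 : Odd (q - 2) := Nat.Odd.sub_even (by omega) hodd (by decide)
    have hcast : ((R.leadingCoeff : ℤ) : ℂ) = ((-(((q:ℤ) - 1) ^ (q - 2)) : ℤ) : ℂ) := by
      push_cast
      rw [show (R.leadingCoeff : ℂ) = ((1:ℂ) - q) ^ (q - 2) from hl,
        show ((1:ℂ) - q) = -((q:ℂ) - 1) from by ring, hodd2.neg_pow]
    exact_mod_cast hcast
  · have h0 := Sc_coeff_zero h3 hodd
    rw [← hR, coeff_map] at h0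
    have hcast : ((R.coeff 0 : ℤ) : ℂ) = (((((q:ℤ) - 1) * (q:ℤ) ^ q) : ℤ) : ℂ) := by
      push_cast
      rw [show (R.coeff 0 : ℂ) = ((q:ℂ) ^ 2 - q) * (q:ℂ) ^ (q - 1) from h0,
        show ((q:ℂ)) ^ q = (q:ℂ) ^ (q - 1) * q from by
          rw [← pow_succ, show q - 1 + 1 = q from by omega]]
      ring
    exact_mod_cast hcast
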